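/- For every x ∈ ℝ, (1/π) ∫_{-∞}^{∞} ln(1/|x−t|) · 1/(1+t²) dt = − ln √(x²+1). In other words, the logarithmic potential of the Cauchy probability measure dμ(t) = (1/π)·dt/(1+t²) is U^μ(x) = ln(1/√(x²+1)). -/

import Mathlib

open MeasureTheory Real Set intervalIntegral

lemma neg_log_le (t : ℝ) (ht : 0 < t) : -Real.log t ≤ 2 * t ^ (-(1:ℝ)/2) := by
  have h1 : Real.log (t ^ (-(1:ℝ)/2)) ≤ t ^ (-(1:ℝ)/2) - 1 :=
    Real.log_le_sub_one_of_pos (Real.rpow_pos_of_pos ht _)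
  rw [Real.log_rpow ht] at h1
  nlinarith [Real.rpow_pos_of_pos ht (-(1:ℝ)/2)]

lemma intInt_log_sin_half :
    IntervalIntegrable (fun θ : ℝ => Real.log |Real.sin θ|) volume 0 (π/2) := by
  set c : ℝ := 2 * (2/π) ^ (-(1:ℝ)/2) with hc
  have hB : IntervalIntegrable (fun θ : ℝ => c * θ ^ (-(1:ℝ)/2)) volume 0 (π/2) :=
    (intervalIntegral.intervalIntegrable_rpow' (by norm_num)).const_mul c
  apply hB.mono_fun
  · exact ((Real.measurable_log.comp (Real.measurable_sin.abs)).aestronglyMeasurable)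
  · rw [uIoc_of_le (by positivity : (0:ℝ) ≤ π/2)]
    filter_upwards [ae_restrict_mem measurableSet_Ioc] with θ hθ
    obtain ⟨h0, h2⟩ := hθ
    have hπ := Real.pi_pos
    have hsin : 0 < Real.sin θ := Real.sin_pos_of_pos_of_lt_pi h0 (by linarith)
    have hsin1 : Real.sin θ ≤ 1 := Real.sin_le_one θ
    have hlb : 2/π * θ ≤ Real.sin θ := Real.mul_le_sin h0.le h2
    have hlbpos : 0 < 2/π * θ := by positivity
    have e1 : ‖Real.log |Real.sin θ|‖ = -Real.log (Real.sin θ) := by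
      rw [abs_of_pos hsin, Real.norm_eq_abs,
        abs_of_nonpos (Real.log_nonpos hsin.le hsin1)]
    rw [e1]
    have e2 : -Real.log (Real.sin θ) ≤ -Real.log (2/π * θ) := by
      have := Real.log_le_log hlbpos hlb
      linarith
    have e3 : -Real.log (2/π * θ) ≤ 2 * (2/π * θ) ^ (-(1:ℝ)/2) := neg_log_le _ hlbpos
    have e4 : (2/π * θ) ^ (-(1:ℝ)/2) = (2/π) ^ (-(1:ℝ)/2) * θ ^ (-(1:ℝ)/2) :=
      Real.mul_rpow (by positivity) h0.le
    have hcpos : 0 < c * θ ^ (-(1:ℝ)/2) := by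
      have : (0:ℝ) < (2/π) ^ (-(1:ℝ)/2) := by positivity
      have : (0:ℝ) < θ ^ (-(1:ℝ)/2) := by positivity
      positivity
    rw [Real.norm_eq_abs, abs_of_pos hcpos]
    calc -Real.log (Real.sin θ) ≤ 2 * (2/π * θ) ^ (-(1:ℝ)/2) := le_trans e2 e3
    _ = c * θ ^ (-(1:ℝ)/2) := by rw [e4, hc]; ring


lemma logsin_periodic : Function.Periodic (fun θ : ℝ => Real.log |Real.sin θ|) π := by
  intro θ; simp [Real.sin_add_pi]

lemma intInt_log_sin_pi :
    IntervalIntegrable (fun θ : ℝ => Real.log |Real.sin θ|) volume (-π) π := by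
  have hπ := Real.pi_pos
  have h1 := intInt_log_sin_half
  have h2 : IntervalIntegrable (fun θ : ℝ => Real.log |Real.sin θ|) volume (π/2) π := by
    have h := h1.comp_sub_left π
    have e : (fun x : ℝ => Real.log |Real.sin (π - x)|) = fun θ : ℝ => Real.log |Real.sin θ| := by
      funext θ; rw [Real.sin_pi_sub]
    rw [e, sub_zero, sub_half] at h
    exact h.symm
  have h0π := h1.trans h2
  have hneg : IntervalIntegrable (fun θ : ℝ => Real.log |Real.sin θ|) volume (-π) 0 := by
    have h := (IntervalIntegrable.iff_comp_neg (by simp)).mp h0π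
    have e : (fun x : ℝ => Real.log |Real.sin (-x)|) = fun θ : ℝ => Real.log |Real.sin θ| := by
      funext θ; rw [Real.sin_neg, abs_neg]
    rw [e] at h
    simpa using h.symm
  exact hneg.trans h0π

lemma intInt_log_sin (a b : ℝ) (ha : a ∈ Icc (-π) π) (hb : b ∈ Icc (-π) π) :
    IntervalIntegrable (fun θ : ℝ => Real.log |Real.sin θ|) volume a b := by
  apply intInt_log_sin_pi.mono_set
  rw [uIcc_of_le (by linarith [Real.pi_pos] : -π ≤ π)]
  exact uIcc_subset_Icc ha hb



section main
variable (x : ℝ)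

noncomputable def rr : ℝ := Real.sqrt (x ^ 2 + 1)

lemma rr_pos : 0 < rr x := Real.sqrt_pos.2 (by positivity)

-- the substituted integrand
noncomputable def hh (θ : ℝ) : ℝ :=
  -Real.log (rr x) - Real.log |Real.sin (Real.arctan x - θ)| + Real.log |Real.sin (θ + π/2)|

lemma hFA : IntervalIntegrable (fun θ => Real.log |Real.sin (Real.arctan x - θ)|)
    volume (-(π/2)) (π/2) := by
  have hπ := Real.pi_pos
  have hα := Real.arctan_mem_Ioo x
  obtain ⟨hα1, hα2⟩ := hα
  have h := (intInt_log_sin (Real.arctan x - π/2) (Real.arctan x + π/2)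
    ⟨by linarith, by linarith⟩ ⟨by linarith, by linarith⟩).comp_sub_left (Real.arctan x)
  have e1 : Real.arctan x - (Real.arctan x - π/2) = π/2 := by ring
  have e2 : Real.arctan x - (Real.arctan x + π/2) = -(π/2) := by ring
  rw [e1, e2] at h
  exact h.symm

lemma hFB : IntervalIntegrable (fun θ => Real.log |Real.sin (θ + π/2)|)
    volume (-(π/2)) (π/2) := by
  have hπ := Real.pi_pos
  have h := (intInt_log_sin 0 π ⟨by linarith, by linarith⟩
    ⟨by linarith, le_refl π⟩).comp_add_right (π/2)
  rw [zero_sub, sub_half] at h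
  exact h

lemma hh_intervalIntegrable : IntervalIntegrable (hh x) volume (-(π/2)) (π/2) := by
  exact ((_root_.intervalIntegrable_const).sub (hFA x)).add hFB

lemma hh_integral : ∫ θ in (-(π/2))..(π/2), hh x θ = -π * Real.log (rr x) := by
  have hπ := Real.pi_pos
  have hα := Real.arctan_mem_Ioo x
  obtain ⟨hα1, hα2⟩ := hα
  have hsplit : ∫ θ in (-(π/2))..(π/2), hh x θ =
      (∫ _θ in (-(π/2))..(π/2), -Real.log (rr x)) -
        (∫ θ in (-(π/2))..(π/2), Real.log |Real.sin (Real.arctan x - θ)|) +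
        ∫ θ in (-(π/2))..(π/2), Real.log |Real.sin (θ + π/2)| := by
    simp only [hh]
    rw [intervalIntegral.integral_add ((_root_.intervalIntegrable_const).sub (hFA x)) hFB,
      intervalIntegral.integral_sub _root_.intervalIntegrable_const (hFA x)]
  have IA : (∫ θ in (-(π/2))..(π/2), Real.log |Real.sin (Real.arctan x - θ)|) =
      ∫ θ in (-(π/2))..(π/2), Real.log |Real.sin θ| := by
    rw [intervalIntegral.integral_comp_sub_left (fun u => Real.log |Real.sin u|) (Real.arctan x)]
    have := logsin_periodic.intervalIntegral_add_eq (Real.arctan x - π/2) (-(π/2))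
    have e1 : Real.arctan x - π/2 + π = Real.arctan x + π/2 := by ring
    have e2 : -(π/2) + π = π/2 := by ring
    rw [e1, e2] at this
    rw [sub_neg_eq_add]
    exact this
  have IB : (∫ θ in (-(π/2))..(π/2), Real.log |Real.sin (θ + π/2)|) =
      ∫ θ in (-(π/2))..(π/2), Real.log |Real.sin θ| := by
    rw [intervalIntegral.integral_comp_add_right (fun u => Real.log |Real.sin u|) (π/2)]
    have := logsin_periodic.intervalIntegral_add_eq (-(π/2)) 0
    have e1 : -(π/2) + π = π/2 := by ring
    have e2 : (0:ℝ) + π = π := by ring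
    rw [e1, e2] at this
    rw [show -(π/2) + π/2 = (0:ℝ) by ring, show π/2 + π/2 = π by ring]
    exact this.symm
  rw [hsplit, IA, IB, intervalIntegral.integral_const, smul_eq_mul]
  ring

end main


lemma hh_pointwise (x θ : ℝ) (hθ : θ ∈ Ioo (-(π/2)) (π/2)) (hne : θ ≠ Real.arctan x) :
    |1 / Real.cos θ ^ 2| • (Real.log (1 / |x - Real.tan θ|) / (1 + Real.tan θ ^ 2)) = hh x θ := by
  have hcos : 0 < Real.cos θ := Real.cos_pos_of_mem_Ioo hθ
  have htan_ne : x - Real.tan θ ≠ 0 := by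
    intro h
    apply hne
    have : Real.tan θ = x := by linarith [sub_eq_zero.mp h]
    rw [← this, Real.arctan_tan hθ.1 hθ.2]
  have h1tan : 1 + Real.tan θ ^ 2 = 1 / Real.cos θ ^ 2 := by
    have h := Real.inv_one_add_tan_sq hcos.ne'
    rw [one_div, ← h, inv_inv]
  have hr : rr x = Real.sqrt (1 + x ^ 2) := by rw [rr, add_comm]
  have hrpos := rr_pos x
  have hkey : x * Real.cos θ - Real.sin θ = rr x * Real.sin (Real.arctan x - θ) := by
    rw [Real.sin_sub, Real.sin_arctan, Real.cos_arctan, hr]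
    have h0 : Real.sqrt (1 + x ^ 2) ≠ 0 := by rw [← hr]; exact hrpos.ne'
    field_simp
  have hxt : x - Real.tan θ = rr x * Real.sin (Real.arctan x - θ) / Real.cos θ := by
    rw [Real.tan_eq_sin_div_cos, ← hkey]
    field_simp
  have hsin_ne : Real.sin (Real.arctan x - θ) ≠ 0 := by
    intro h
    apply htan_ne
    rw [hxt, h, mul_zero, zero_div]
  -- LHS simplification
  have habs : |(1:ℝ) / Real.cos θ ^ 2| = 1 / Real.cos θ ^ 2 := abs_of_pos (by positivity)
  rw [smul_eq_mul, habs, h1tan]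
  have hc2 : (1:ℝ) / Real.cos θ ^ 2 ≠ 0 := by positivity
  rw [mul_comm, div_mul_cancel₀ _ hc2]
  rw [one_div, Real.log_inv, hxt, abs_div, abs_mul, abs_of_pos hrpos, abs_of_pos hcos,
    Real.log_div (by positivity) hcos.ne', Real.log_mul hrpos.ne' (abs_ne_zero.2 hsin_ne),
    hh]
  have : Real.log |Real.sin (θ + π/2)| = Real.log (Real.cos θ) := by
    rw [Real.sin_add_pi_div_two, abs_of_pos hcos]
  rw [this]
  ring


theorem log_potential_cauchy (x : ℝ) :
    Integrable (fun t => Real.log (1 / |x - t|) / (1 + t ^ 2)) ∧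
    (1 / Real.pi) * ∫ t : ℝ, Real.log (1 / |x - t|) / (1 + t ^ 2) =
      - Real.log (Real.sqrt (x ^ 2 + 1)) := by
  have hπ := Real.pi_pos
  set g : ℝ → ℝ := fun t => Real.log (1 / |x - t|) / (1 + t ^ 2) with hg
  set s : Set ℝ := Ioo (-(π/2)) (π/2) with hsdef
  have hs : MeasurableSet s := measurableSet_Ioo
  have hderiv : ∀ θ ∈ s, HasDerivWithinAt Real.tan (1 / Real.cos θ ^ 2) s θ := fun θ hθ =>
    (Real.hasDerivAt_tan (Real.cos_pos_of_mem_Ioo hθ).ne').hasDerivWithinAt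
  have hinj : InjOn Real.tan s := Real.injOn_tan
  have himg : Real.tan '' s = univ := Real.image_tan_Ioo
  -- a.e. equality on s
  have hae : (fun θ => |1 / Real.cos θ ^ 2| • g (Real.tan θ)) =ᵐ[volume.restrict s] hh x := by
    have h0 : ∀ᵐ θ ∂(volume.restrict s), θ ≠ Real.arctan x :=
      ae_restrict_of_ae (by
        refine (MeasureTheory.ae_iff).2 ?_
        have : {θ : ℝ | ¬θ ≠ Real.arctan x} = {Real.arctan x} := by
          ext θ; simp
        rw [this]
        exact Real.volume_singleton)
    filter_upwards [ae_restrict_mem hs, h0] with θ hθ hne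
    exact hh_pointwise x θ hθ hne
  have hIoo : IntegrableOn (hh x) s := by
    have := (hh_intervalIntegrable x)
    rwa [intervalIntegrable_iff_integrableOn_Ioo_of_le (by linarith)] at this
  have hIs : IntegrableOn (fun θ => |1 / Real.cos θ ^ 2| • g (Real.tan θ)) s :=
    hIoo.congr hae.symm
  have hint : Integrable g := by
    have := (integrableOn_image_iff_integrableOn_abs_deriv_smul hs hderiv hinj g).2 hIs
    rw [himg] at this
    exact integrableOn_univ.mp this
  refine ⟨hint, ?_⟩
  have hval : ∫ t : ℝ, g t = -π * Real.log (rr x) := by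
    calc ∫ t : ℝ, g t = ∫ t in univ, g t := setIntegral_univ.symm
    _ = ∫ t in Real.tan '' s, g t := by rw [himg]
    _ = ∫ θ in s, |1 / Real.cos θ ^ 2| • g (Real.tan θ) :=
        integral_image_eq_integral_abs_deriv_smul hs hderiv hinj g
    _ = ∫ θ in s, hh x θ := integral_congr_ae hae
    _ = ∫ θ in (-(π/2))..(π/2), hh x θ := by
        rw [intervalIntegral.integral_of_le (by linarith), hsdef,
          ← MeasureTheory.integral_Ioc_eq_integral_Ioo]
    _ = -π * Real.log (rr x) := hh_integral x
  rw [hval, rr]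
  field_simp
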